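/- Let κ ≥ 1, 0 < ρ < 1, L_π ≥ 0, π̄0 ≥ 0, B ≥ 0, L_{c1} ≥ 0, L_{c2} ≥ 0, c₀ ≥ 0 and an integer τ ≥ 1 be given, and let s ≤ e be natural numbers with e − s + 1 ≤ τ. For each t let c_t : ℝ^n × ℝ^m → ℝ satisfy |c_t(x,u) − c_t(x',u')| ≤ (L_{c1}(max(‖x‖,‖x'‖) + max(‖u‖,‖u'‖)) + L_{c2})·(‖x−x'‖ + ‖u−u'‖) for all arguments and 0 ≤ c_t(0,0) ≤ c₀. Let x_t ∈ ℝ^n and u_t ∈ ℝ^m satisfy, for every t with s ≤ t ≤ e: ‖x_t‖ ≤ κ ρ^{t−s} ‖x_s‖ + B and ‖u_t‖ ≤ L_π ‖x_t‖ + π̄0. Then ((1/τ)·Σ_{t=s}^{e} c_t(x_t, u_t))² ≤ (1/τ)·(α17·‖x_s‖⁴ + α18·‖x_s‖² + α19·(e−s+1)), where α17 := 160 L_{c1}² (1+8L_π⁴) κ⁴/(1−ρ⁴), α18 := 10 L_{c2}² (1+2L_π²) κ²/(1−ρ²), and α19 := 160 L_{c1}² ((1+8L_π⁴) B⁴ +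 π̄0⁴) + 10 L_{c2}² ((1+2L_π²) B² + π̄0²) + 5c₀². -/

import Mathlib

private lemma sq_add_le (u v : ℝ) : (u + v) ^ 2 ≤ 2 * u ^ 2 + 2 * v ^ 2 := by
  nlinarith [sq_nonneg (u - v)]

private lemma pow4_add_le (u v : ℝ) : (u + v) ^ 4 ≤ 8 * u ^ 4 + 8 * v ^ 4 := by
  nlinarith [sq_nonneg (u - v), sq_nonneg (u ^ 2 - v ^ 2), sq_nonneg (u + v),
    sq_nonneg (u ^ 2 + v ^ 2 - (u + v) ^ 2 / 2)]

private lemma geom_sum_le_inv (y : ℝ) (hy0 : 0 ≤ y) (hy1 : y < 1) (N : ℕ) :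
    ∑ i ∈ Finset.range N, y ^ i ≤ 1 / (1 - y) := by
  have h1 : 0 < 1 - y := by linarith
  have h2 : ∑ i ∈ Finset.range N, y ^ i = (1 - y ^ N) / (1 - y) := by
    rw [geom_sum_eq (by linarith : y ≠ 1)]
    rw [div_eq_div_iff (by linarith) (by linarith)]
    ring
  rw [h2]
  exact div_le_div₀ (by norm_num) (by nlinarith [pow_nonneg hy0 N]) h1 le_rfl

set_option maxHeartbeats 1000000 in
private lemma key_bound (Lc1 Lc2 c0 Lπ pibar0 B κ r X Ct a b : ℝ)
    (hLc1 : 0 ≤ Lc1) (hLc2 : 0 ≤ Lc2) (hc0 : 0 ≤ c0) (hLπ : 0 ≤ Lπ)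
    (hπ : 0 ≤ pibar0) (hB : 0 ≤ B) (hκ : 0 ≤ κ) (hr : 0 ≤ r) (hX : 0 ≤ X)
    (ha0 : 0 ≤ a) (hb0 : 0 ≤ b)
    (ha : a ≤ κ * r * X + B) (hb : b ≤ Lπ * a + pibar0)
    (hC : |Ct| ≤ Lc1 * (a + b) ^ 2 + Lc2 * (a + b) + c0) :
    Ct ^ 2 ≤ 160 * Lc1 ^ 2 * (1 + 8 * Lπ ^ 4) * κ ^ 4 * r ^ 4 * X ^ 4
      + 10 * Lc2 ^ 2 * (1 + 2 * Lπ ^ 2) * κ ^ 2 * r ^ 2 * X ^ 2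
      + (160 * Lc1 ^ 2 * ((1 + 8 * Lπ ^ 4) * B ^ 4 + pibar0 ^ 4)
        + 10 * Lc2 ^ 2 * ((1 + 2 * Lπ ^ 2) * B ^ 2 + pibar0 ^ 2) + 5 * c0 ^ 2) := by
  have hS : 0 ≤ a + b := by linarith
  -- squares
  have ha2 : a ^ 2 ≤ 2 * (κ * r * X) ^ 2 + 2 * B ^ 2 := by
    have h := pow_le_pow_left₀ ha0 ha 2
    nlinarith [sq_nonneg (κ * r * X - B)]
  have hb2 : b ^ 2 ≤ 2 * Lπ ^ 2 * a ^ 2 + 2 * pibar0 ^ 2 := by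
    have h := pow_le_pow_left₀ hb0 hb 2
    nlinarith [sq_nonneg (Lπ * a - pibar0)]
  have hS2 : (a + b) ^ 2 ≤ 4 * (1 + 2 * Lπ ^ 2) * ((κ * r * X) ^ 2 + B ^ 2)
      + 4 * pibar0 ^ 2 := by
    nlinarith [sq_nonneg (a - b), mul_nonneg (mul_nonneg hLπ hLπ)
      (by nlinarith [sq_nonneg (κ * r * X - B)] : 0 ≤ 2 * (κ * r * X) ^ 2 + 2 * B ^ 2 - a ^ 2)]
  -- fourth powers
  have ha4 : a ^ 4 ≤ 8 * (κ * r * X) ^ 4 + 8 * B ^ 4 :=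
    le_trans (pow_le_pow_left₀ ha0 ha 4) (pow4_add_le _ _)
  have hb4 : b ^ 4 ≤ 8 * (Lπ * a) ^ 4 + 8 * pibar0 ^ 4 :=
    le_trans (pow_le_pow_left₀ hb0 hb 4) (pow4_add_le _ _)
  have hS4 : (a + b) ^ 4 ≤ 64 * (1 + 8 * Lπ ^ 4) * ((κ * r * X) ^ 4 + B ^ 4)
      + 64 * pibar0 ^ 4 := by
    have h8 : (a + b) ^ 4 ≤ 8 * a ^ 4 + 8 * b ^ 4 := pow4_add_le a b
    have hL4 : (0:ℝ) ≤ Lπ ^ 4 := pow_nonneg hLπ 4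
    nlinarith [mul_nonneg hL4
      (by linarith : 0 ≤ 8 * (κ * r * X) ^ 4 + 8 * B ^ 4 - a ^ 4)]
  -- squared cost bound
  have h1 : Ct ^ 2 ≤ (Lc1 * (a + b) ^ 2 + Lc2 * (a + b) + c0) ^ 2 := by
    calc Ct ^ 2 = |Ct| ^ 2 := (sq_abs Ct).symm
    _ ≤ _ := pow_le_pow_left₀ (abs_nonneg Ct) hC 2
  have h3 : Ct ^ 2 ≤ 5 / 2 * Lc1 ^ 2 * (a + b) ^ 4 + 5 / 2 * Lc2 ^ 2 * (a + b) ^ 2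
      + 5 * c0 ^ 2 := by
    nlinarith [h1, sq_nonneg (Lc1 * (a + b) ^ 2 - Lc2 * (a + b)),
      sq_nonneg (Lc1 * (a + b) ^ 2 - 2 * c0), sq_nonneg (Lc2 * (a + b) - 2 * c0)]
  have m1 : 5 / 2 * Lc1 ^ 2 * (a + b) ^ 4
      ≤ 5 / 2 * Lc1 ^ 2 * (64 * (1 + 8 * Lπ ^ 4) * ((κ * r * X) ^ 4 + B ^ 4)
        + 64 * pibar0 ^ 4) :=
    mul_le_mul_of_nonneg_left hS4 (by positivity)
  have m2 : 5 / 2 * Lc2 ^ 2 * (a + b) ^ 2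
      ≤ 5 / 2 * Lc2 ^ 2 * (4 * (1 + 2 * Lπ ^ 2) * ((κ * r * X) ^ 2 + B ^ 2)
        + 4 * pibar0 ^ 2) :=
    mul_le_mul_of_nonneg_left hS2 (by positivity)
  nlinarith [h3, m1, m2]

/-- Bound on the squared average batch cost used in the auxiliary-regret
analysis: within a batch of length at most τ starting at stage s, the state
satisfies the E-ISS certificate with offset B, the input comes from an
L_π-Lipschitz policy, and the stage costs satisfy the paper's local Lipschitz
assumption with 0 ≤ c_t(0,0) ≤ c₀. -/
theorem batch_cost_sq_bound (n m : ℕ) (κ ρ Lπ pibar0 B Lc1 Lc2 c0 α17 α18 α19 : ℝ)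
    (τ : ℕ) (hκ : 1 ≤ κ) (hρ0 : 0 < ρ) (hρ1 : ρ < 1) (hLπ : 0 ≤ Lπ)
    (hpibar0 : 0 ≤ pibar0) (hB : 0 ≤ B) (hLc1 : 0 ≤ Lc1) (hLc2 : 0 ≤ Lc2)
    (hc0 : 0 ≤ c0) (hτ : 1 ≤ τ)
    (hα17 : α17 = 160 * Lc1 ^ 2 * (1 + 8 * Lπ ^ 4) * κ ^ 4 / (1 - ρ ^ 4))
    (hα18 : α18 = 10 * Lc2 ^ 2 * (1 + 2 * Lπ ^ 2) * κ ^ 2 / (1 - ρ ^ 2))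
    (hα19 : α19 = 160 * Lc1 ^ 2 * ((1 + 8 * Lπ ^ 4) * B ^ 4 + pibar0 ^ 4)
        + 10 * Lc2 ^ 2 * ((1 + 2 * Lπ ^ 2) * B ^ 2 + pibar0 ^ 2) + 5 * c0 ^ 2)
    (s e : ℕ) (hse : s ≤ e) (hlen : e - s + 1 ≤ τ)
    (c : ℕ → EuclideanSpace ℝ (Fin n) → EuclideanSpace ℝ (Fin m) → ℝ)
    (hc : ∀ (t : ℕ) (x x' : EuclideanSpace ℝ (Fin n)) (u u' : EuclideanSpace ℝ (Fin m)),
        |c t x u - c t x' u'| ≤ (Lc1 * (max ‖x‖ ‖x'‖ + max ‖u‖ ‖u'‖) + Lc2)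
          * (‖x - x'‖ + ‖u - u'‖))
    (hc00 : ∀ t : ℕ, 0 ≤ c t 0 0 ∧ c t 0 0 ≤ c0)
    (x : ℕ → EuclideanSpace ℝ (Fin n)) (u : ℕ → EuclideanSpace ℝ (Fin m))
    (hx : ∀ t, s ≤ t → t ≤ e → ‖x t‖ ≤ κ * ρ ^ (t - s) * ‖x s‖ + B)
    (hu : ∀ t, s ≤ t → t ≤ e → ‖u t‖ ≤ Lπ * ‖x t‖ + pibar0) :
    (1 / (τ : ℝ) * ∑ t ∈ Finset.Icc s e, c t (x t) (u t)) ^ 2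
      ≤ 1 / (τ : ℝ) * (α17 * ‖x s‖ ^ 4 + α18 * ‖x s‖ ^ 2
          + α19 * ((e - s + 1 : ℕ) : ℝ)) := by
  have hκ0 : (0:ℝ) ≤ κ := le_trans zero_le_one hκ
  have hX : (0:ℝ) ≤ ‖x s‖ := norm_nonneg _
  set X := ‖x s‖ with hXdef
  set A := 160 * Lc1 ^ 2 * (1 + 8 * Lπ ^ 4) * κ ^ 4 with hA
  set C := 10 * Lc2 ^ 2 * (1 + 2 * Lπ ^ 2) * κ ^ 2 with hCdef
  have hA0 : 0 ≤ A := by rw [hA]; positivity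
  have hC0 : 0 ≤ C := by rw [hCdef]; positivity
  -- pointwise bound on each squared stage cost
  have hpt : ∀ t ∈ Finset.Icc s e, (c t (x t) (u t)) ^ 2
      ≤ A * (ρ ^ (t - s)) ^ 4 * X ^ 4 + C * (ρ ^ (t - s)) ^ 2 * X ^ 2 + α19 := by
    intro t ht
    rw [Finset.mem_Icc] at ht
    obtain ⟨hst, hte⟩ := ht
    have hxb := hx t hst hte
    have hub := hu t hst hte
    -- cost bound via Lipschitz at origin
    have hlip := hc t (x t) 0 (u t) 0
    simp only [norm_zero, sub_zero, max_eq_left (norm_nonneg _)] at hlip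
    have hcc := hc00 t
    have habs : |c t (x t) (u t)| ≤ Lc1 * (‖x t‖ + ‖u t‖) ^ 2
        + Lc2 * (‖x t‖ + ‖u t‖) + c0 := by
      have h1 : |c t (x t) (u t)| ≤ |c t (x t) (u t) - c t 0 0| + |c t 0 0| := by
        calc |c t (x t) (u t)| = |(c t (x t) (u t) - c t 0 0) + c t 0 0| := by ring_nf
        _ ≤ _ := abs_add_le _ _
      have h2 : |c t 0 0| ≤ c0 := by
        rw [abs_of_nonneg hcc.1]; exact hcc.2
      nlinarith [hlip, h1, h2]
    have hkey := key_bound Lc1 Lc2 c0 Lπ pibar0 B κ (ρ ^ (t - s)) X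
      (c t (x t) (u t)) ‖x t‖ ‖u t‖ hLc1 hLc2 hc0 hLπ hpibar0 hB hκ0
      (pow_nonneg (le_of_lt hρ0) _) hX (norm_nonneg _) (norm_nonneg _)
      hxb hub habs
    calc (c t (x t) (u t)) ^ 2 ≤ _ := hkey
    _ = A * (ρ ^ (t - s)) ^ 4 * X ^ 4 + C * (ρ ^ (t - s)) ^ 2 * X ^ 2 + α19 := by
        rw [hA, hCdef, hα19]
  -- sum of squared costs
  have hcard : (Finset.Icc s e).card = e - s + 1 := by
    rw [Nat.card_Icc]; omega
  have hsumsq : ∑ t ∈ Finset.Icc s e, (c t (x t) (u t)) ^ 2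
      ≤ α17 * X ^ 4 + α18 * X ^ 2 + α19 * ((e - s + 1 : ℕ) : ℝ) := by
    have h1 : ∑ t ∈ Finset.Icc s e, (c t (x t) (u t)) ^ 2
        ≤ ∑ t ∈ Finset.Icc s e,
          (A * (ρ ^ (t - s)) ^ 4 * X ^ 4 + C * (ρ ^ (t - s)) ^ 2 * X ^ 2 + α19) :=
      Finset.sum_le_sum hpt
    have hreidx : ∀ q : ℕ, ∑ t ∈ Finset.Icc s e, (ρ ^ (t - s)) ^ q
        = ∑ i ∈ Finset.range (e - s + 1), (ρ ^ q) ^ i := by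
      intro q
      rw [← Finset.Ico_add_one_right_eq_Icc, Finset.sum_Ico_eq_sum_range]
      rw [show e + 1 - s = e - s + 1 by omega]
      apply Finset.sum_congr rfl
      intro i _
      rw [show s + i - s = i by omega, ← pow_mul, mul_comm, pow_mul]
    have hρ41 : ρ ^ 4 < 1 := pow_lt_one₀ (le_of_lt hρ0) hρ1 (by norm_num)
    have hρ21 : ρ ^ 2 < 1 := pow_lt_one₀ (le_of_lt hρ0) hρ1 (by norm_num)
    have hg4 : ∑ t ∈ Finset.Icc s e, (ρ ^ (t - s)) ^ 4 ≤ 1 / (1 - ρ ^ 4) := by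
      rw [hreidx 4]
      exact geom_sum_le_inv _ (by positivity) hρ41 _
    have hg2 : ∑ t ∈ Finset.Icc s e, (ρ ^ (t - s)) ^ 2 ≤ 1 / (1 - ρ ^ 2) := by
      rw [hreidx 2]
      exact geom_sum_le_inv _ (by positivity) hρ21 _
    have hsplit : ∑ t ∈ Finset.Icc s e,
        (A * (ρ ^ (t - s)) ^ 4 * X ^ 4 + C * (ρ ^ (t - s)) ^ 2 * X ^ 2 + α19)
        = A * X ^ 4 * (∑ t ∈ Finset.Icc s e, (ρ ^ (t - s)) ^ 4)
          + C * X ^ 2 * (∑ t ∈ Finset.Icc s e, (ρ ^ (t - s)) ^ 2)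
          + α19 * ((e - s + 1 : ℕ) : ℝ) := by
      rw [Finset.sum_add_distrib, Finset.sum_add_distrib, Finset.sum_const, hcard,
        nsmul_eq_mul, Finset.mul_sum, Finset.mul_sum,
        mul_comm ((e - s + 1 : ℕ) : ℝ) α19]
      congr 1
      congr 1 <;> exact Finset.sum_congr rfl fun t _ => by ring
    have hα17' : α17 = A * (1 / (1 - ρ ^ 4)) := by
      rw [hα17, hA]; ring
    have hα18' : α18 = C * (1 / (1 - ρ ^ 2)) := by
      rw [hα18, hCdef]; ring
    have hXA : A * X ^ 4 * (∑ t ∈ Finset.Icc s e, (ρ ^ (t - s)) ^ 4)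
        ≤ α17 * X ^ 4 := by
      rw [hα17']
      calc A * X ^ 4 * (∑ t ∈ Finset.Icc s e, (ρ ^ (t - s)) ^ 4)
          ≤ A * X ^ 4 * (1 / (1 - ρ ^ 4)) :=
            mul_le_mul_of_nonneg_left hg4 (by positivity)
      _ = A * (1 / (1 - ρ ^ 4)) * X ^ 4 := by ring
    have hXC : C * X ^ 2 * (∑ t ∈ Finset.Icc s e, (ρ ^ (t - s)) ^ 2)
        ≤ α18 * X ^ 2 := by
      rw [hα18']
      calc C * X ^ 2 * (∑ t ∈ Finset.Icc s e, (ρ ^ (t - s)) ^ 2)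
          ≤ C * X ^ 2 * (1 / (1 - ρ ^ 2)) :=
            mul_le_mul_of_nonneg_left hg2 (by positivity)
      _ = C * (1 / (1 - ρ ^ 2)) * X ^ 2 := by ring
    calc ∑ t ∈ Finset.Icc s e, (c t (x t) (u t)) ^ 2
        ≤ _ := h1
    _ = _ := hsplit
    _ ≤ α17 * X ^ 4 + α18 * X ^ 2 + α19 * ((e - s + 1 : ℕ) : ℝ) := by
        linarith
  -- Cauchy–Schwarz and final assembly
  have hCS : (∑ t ∈ Finset.Icc s e, c t (x t) (u t)) ^ 2
      ≤ ((e - s + 1 : ℕ) : ℝ) * ∑ t ∈ Finset.Icc s e, (c t (x t) (u t)) ^ 2 := by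
    have := sq_sum_le_card_mul_sum_sq
      (s := Finset.Icc s e) (f := fun t => c t (x t) (u t))
    simpa [hcard] using this
  have hτ0 : (0:ℝ) < (τ : ℝ) := by exact_mod_cast hτ
  have hNτ : ((e - s + 1 : ℕ) : ℝ) ≤ (τ : ℝ) := by exact_mod_cast hlen
  have hsq0 : 0 ≤ ∑ t ∈ Finset.Icc s e, (c t (x t) (u t)) ^ 2 :=
    Finset.sum_nonneg fun t _ => sq_nonneg _
  have key : (∑ t ∈ Finset.Icc s e, c t (x t) (u t)) ^ 2
      ≤ (τ : ℝ) * (α17 * X ^ 4 + α18 * X ^ 2 + α19 * ((e - s + 1 : ℕ) : ℝ)) := by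
    calc (∑ t ∈ Finset.Icc s e, c t (x t) (u t)) ^ 2
        ≤ ((e - s + 1 : ℕ) : ℝ) * ∑ t ∈ Finset.Icc s e, (c t (x t) (u t)) ^ 2 := hCS
    _ ≤ (τ : ℝ) * ∑ t ∈ Finset.Icc s e, (c t (x t) (u t)) ^ 2 :=
        mul_le_mul_of_nonneg_right hNτ hsq0
    _ ≤ (τ : ℝ) * (α17 * X ^ 4 + α18 * X ^ 2 + α19 * ((e - s + 1 : ℕ) : ℝ)) :=
        mul_le_mul_of_nonneg_left hsumsq (le_of_lt hτ0)
  rw [mul_pow, div_pow, one_pow]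
  have h2 : (1 / (τ : ℝ) ^ 2) * (∑ t ∈ Finset.Icc s e, c t (x t) (u t)) ^ 2
      ≤ (1 / (τ : ℝ) ^ 2) * ((τ : ℝ) * (α17 * X ^ 4 + α18 * X ^ 2
        + α19 * ((e - s + 1 : ℕ) : ℝ))) :=
    mul_le_mul_of_nonneg_left key (by positivity)
  calc (1 / (τ : ℝ) ^ 2) * (∑ t ∈ Finset.Icc s e, c t (x t) (u t)) ^ 2
      ≤ _ := h2
  _ = 1 / (τ : ℝ) * (α17 * X ^ 4 + α18 * X ^ 2 + α19 * ((e - s + 1 : ℕ) : ℝ)) := by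
      field_simp
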